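/- Define g(k) = (1/k)·(4^k·(k!)^2/(2k)! − 1) for integers k ≥ 1. Then g is strictly decreasing: g(k) > g(k+1) for all k ≥ 1. -/

import Mathlib

open Nat

lemma key_nat : ∀ k : ℕ, 1 ≤ k → (2*k+1)! < 4^k * k ! * (k+1)! := by
  intro k hk
  induction k with
  | zero => omega
  | succ n ih =>
    rcases Nat.eq_or_lt_of_le hk with h | h
    · simp [← h]; decide
    · have hn : 1 ≤ n := by omega
      have ihn := ih hn
      have h1 : (2*(n+1)+1)! = (2*n+3) * ((2*n+2) * (2*n+1)!) := by
        have : 2*(n+1)+1 = (2*n+2)+1 := by ring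
        rw [this, Nat.factorial_succ]
        have : 2*n+2 = (2*n+1)+1 := by ring
        rw [this, Nat.factorial_succ]
      rw [h1]
      have h2 : 4^(n+1) * (n+1)! * (n+1+1)! = (4*(n+1)*(n+2)) * (4^n * n ! * (n+1)!) := by
        rw [Nat.factorial_succ (n+1), Nat.factorial_succ n]
        ring
      rw [h2]
      have h3 : (2*n+3) * (2*n+2) < 4*(n+1)*(n+2) := by nlinarith
      calc (2*n+3) * ((2*n+2) * (2*n+1)!) = ((2*n+3) * (2*n+2)) * (2*n+1)! := by ring
        _ < (4*(n+1)*(n+2)) * (4^n * n ! * (n+1)!) := by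
            apply Nat.mul_lt_mul_of_lt_of_le h3 (le_of_lt ihn)
            positivity

/-- g(k) = (1/k)·(4^k·(k!)^2/(2k)! − 1) is strictly decreasing
for k ≥ 1. -/
theorem normalized_depth_strict_anti (g : ℕ → ℚ)
    (hg : ∀ k : ℕ, 1 ≤ k →
      g k = (1/(k : ℚ)) * (4^k * ((k ! : ℚ))^2 / ((2*k)! : ℚ) - 1)) :
    ∀ k : ℕ, 1 ≤ k → g (k+1) < g k := by
  intro k hk
  rw [hg k hk, hg (k+1) (by omega)]
  have hq : (1:ℚ) ≤ (k:ℚ) := by exact_mod_cast hk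
  have hF : (0:ℚ) < ((2*k)! : ℚ) := by exact_mod_cast Nat.factorial_pos _
  -- key inequality in ℚ
  have hkey : ((2*k+1) : ℚ) * ((2*k)! : ℚ) < 4^k * ((k ! : ℚ))^2 * ((k:ℚ)+1) := by
    have h := key_nat k hk
    have h1 : (2*k+1)! = (2*k+1) * (2*k)! := Nat.factorial_succ _
    have h2 : (k+1)! = (k+1) * k ! := Nat.factorial_succ _
    rw [h1, h2] at h
    have : ((2*k+1) * (2*k)! : ℕ) < (4^k * k ! * ((k+1) * k !) : ℕ) := h
    have := (Nat.cast_lt (α := ℚ)).2 this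
    push_cast at this ⊢
    nlinarith [this]
  have hfac : ((2*(k+1))! : ℚ) = (2*(k:ℚ)+2) * (2*(k:ℚ)+1) * ((2*k)! : ℚ) := by
    have : (2*(k+1)) = ((2*k+1)+1) := by ring
    rw [this, Nat.factorial_succ, Nat.factorial_succ]
    push_cast
    ring
  have hfac2 : ((k+1)! : ℚ) = ((k:ℚ)+1) * (k ! : ℚ) := by
    rw [Nat.factorial_succ]; push_cast; ring
  rw [hfac, hfac2]
  have hk0 : (0:ℚ) < (k:ℚ) := by linarith
  have hpow : (0:ℚ) < 4^k := by positivity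
  have hfacpos : (0:ℚ) < (k ! : ℚ) := by exact_mod_cast Nat.factorial_pos k
  have hk1 : (0:ℚ) < (k:ℚ)+1 := by linarith
  push_cast
  rw [pow_succ]
  rw [one_div_mul_eq_div, one_div_mul_eq_div, div_lt_div_iff₀ hk1 hk0, sub_mul, sub_mul,
    div_mul_eq_mul_div, div_mul_eq_mul_div, div_sub' (by positivity), div_sub' (ne_of_gt hF),
    div_lt_div_iff₀ (by positivity) hF]
  ring_nf
  ring_nf at hkey hF
  nlinarith [mul_lt_mul_of_pos_left (mul_lt_mul_of_pos_left hkey hF) hk1, hk0, hF]
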